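/- arXiv:2508.10204 — 6 statements merged into one kernel-verified Lean document; each statement's English description precedes it below -/
import Mathlib

section
/- Let (δ, v, z, s) be feasible for the mixed-integer formulation (P). Then (δ, v) is feasible for the continuous formulation (Q); that is, for every player i and action a_i ∈ A_i, v_i − u_i(a_i, δ_{-i}) ≥ 0 and δ_i(a_i)·(v_i − u_i(a_i, δ_{-i})) = 0. -/
open Finset

variable {N : Type*} [Fintype N] [DecidableEq N] [Nonempty N]
variable {A : N → Type*} [∀ i, Fintype (A i)] [∀ i, DecidableEq (A i)]
variable [∀ i, Nonempty (A i)]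

/-- `δ` is a mixed strategy profile: each `δ i` is nonnegative and sums to 1. -/
def IsMixedProfile {N : Type*} {A : N → Type*} [∀ i, Fintype (A i)]
    (δ : ∀ i, A i → ℝ) : Prop :=
  (∀ i a, 0 ≤ δ i a) ∧ ∀ i, ∑ a, δ i a = 1

/-- Expected utility of player `i` under mixed strategy profile `δ`. -/
def expUtil {N : Type*} [Fintype N] [DecidableEq N] {A : N → Type*}
    [∀ i, Fintype (A i)] (u : N → (∀ j, A j) → ℝ) (δ : ∀ i, A i → ℝ) (i : N) : ℝ :=
  ∑ a : ∀ j, A j, (∏ j, δ j (a j)) * u i a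

/-- The point-mass (pure) strategy on action `ai`. -/
def pureStrat {N : Type*} {A : N → Type*} [∀ i, DecidableEq (A i)]
    (i : N) (ai : A i) : A i → ℝ := fun b => if b = ai then 1 else 0

/-- `u_i(a_i, δ_{-i})`: expected utility of player `i` when playing the pure
action `ai` against the opponents' profile `δ_{-i}`. -/
def devUtil {N : Type*} [Fintype N] [DecidableEq N] {A : N → Type*}
    [∀ i, Fintype (A i)] [∀ i, DecidableEq (A i)]
    (u : N → (∀ j, A j) → ℝ) (δ : ∀ i, A i → ℝ) (i : N) (ai : A i) : ℝ :=
  expUtil u (Function.update δ i (pureStrat i ai)) i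

/-- Minimum of `u i` over pure action profiles. -/
noncomputable def minU {N : Type*} [Fintype N] [DecidableEq N] {A : N → Type*}
    [∀ i, Fintype (A i)] [∀ i, Nonempty (A i)]
    (u : N → (∀ j, A j) → ℝ) (i : N) : ℝ :=
  Finset.univ.inf' Finset.univ_nonempty (u i)

/-- Maximum of `u i` over pure action profiles. -/
noncomputable def maxU {N : Type*} [Fintype N] [DecidableEq N] {A : N → Type*}
    [∀ i, Fintype (A i)] [∀ i, Nonempty (A i)]
    (u : N → (∀ j, A j) → ℝ) (i : N) : ℝ :=
  Finset.univ.sup' Finset.univ_nonempty (u i)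

/-- `δ` is a Nash equilibrium. -/
def IsNashEq {N : Type*} [Fintype N] [DecidableEq N] {A : N → Type*}
    [∀ i, Fintype (A i)] (u : N → (∀ j, A j) → ℝ) (δ : ∀ i, A i → ℝ) : Prop :=
  IsMixedProfile δ ∧ ∀ (i : N) (δ' : A i → ℝ), (∀ a, 0 ≤ δ' a) → (∑ a, δ' a = 1) →
    expUtil u (Function.update δ i δ') i ≤ expUtil u δ i

/-- `δ` is an ε-Nash equilibrium. -/
def IsEpsNashEq {N : Type*} [Fintype N] [DecidableEq N] {A : N → Type*}
    [∀ i, Fintype (A i)] (u : N → (∀ j, A j) → ℝ) (δ : ∀ i, A i → ℝ) (ε : ℝ) : Prop :=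
  IsMixedProfile δ ∧ ∀ (i : N) (δ' : A i → ℝ), (∀ a, 0 ≤ δ' a) → (∑ a, δ' a = 1) →
    expUtil u (Function.update δ i δ') i ≤ expUtil u δ i + ε

/-- Feasibility for the mixed-integer formulation (P). -/
def FeasP {N : Type*} [Fintype N] [DecidableEq N] {A : N → Type*}
    [∀ i, Fintype (A i)] [∀ i, DecidableEq (A i)] [∀ i, Nonempty (A i)]
    (u : N → (∀ j, A j) → ℝ) (δ : ∀ i, A i → ℝ) (v : N → ℝ)
    (z s : ∀ i, A i → ℝ) : Prop :=
  IsMixedProfile δ ∧ ∀ (i : N) (ai : A i),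
    v i = s i ai + devUtil u δ i ai ∧
    δ i ai ≤ z i ai ∧
    s i ai ≤ (1 - z i ai) * (maxU u i - minU u i) ∧
    0 ≤ s i ai ∧ s i ai ≤ maxU u i - minU u i ∧
    minU u i ≤ v i ∧ v i ≤ maxU u i ∧
    (z i ai = 0 ∨ z i ai = 1)

/-- Feasibility for the continuous formulation (Q). -/
def FeasQ {N : Type*} [Fintype N] [DecidableEq N] {A : N → Type*}
    [∀ i, Fintype (A i)] [∀ i, DecidableEq (A i)] [∀ i, Nonempty (A i)]
    (u : N → (∀ j, A j) → ℝ) (δ : ∀ i, A i → ℝ) (v : N → ℝ) : Prop :=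
  IsMixedProfile δ ∧ ∀ (i : N) (ai : A i),
    0 ≤ v i - devUtil u δ i ai ∧
    δ i ai * (v i - devUtil u δ i ai) = 0 ∧
    minU u i ≤ v i ∧ v i ≤ maxU u i

/-- Feasibility for the penalized formulation (R). -/
def FeasR {N : Type*} [Fintype N] [DecidableEq N] {A : N → Type*}
    [∀ i, Fintype (A i)] [∀ i, DecidableEq (A i)] [∀ i, Nonempty (A i)]
    (u : N → (∀ j, A j) → ℝ) (δ : ∀ i, A i → ℝ) (v : N → ℝ) (ϖ : ℝ) : Prop :=
  IsMixedProfile δ ∧ ∀ (i : N) (ai : A i),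
    δ i ai * (v i - devUtil u δ i ai) ≤ ϖ ∧
    -(δ i ai * (v i - devUtil u δ i ai)) ≤ ϖ ∧
    0 ≤ v i - devUtil u δ i ai ∧
    minU u i ≤ v i ∧ v i ≤ maxU u i

/-- Any feasible point of (P) projects to a feasible point of (Q). -/
theorem feasP_to_feasQ (u : N → (∀ j, A j) → ℝ) (δ : ∀ i, A i → ℝ) (v : N → ℝ)
    (z s : ∀ i, A i → ℝ) (hP : FeasP u δ v z s) :
    FeasQ u δ v ∧ ∀ (i : N) (ai : A i),
      0 ≤ v i - devUtil u δ i ai ∧ δ i ai * (v i - devUtil u δ i ai) = 0 := by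
  obtain ⟨hmix, h⟩ := hP
  have key : ∀ (i : N) (ai : A i),
      0 ≤ v i - devUtil u δ i ai ∧ δ i ai * (v i - devUtil u δ i ai) = 0 := by
    intro i ai
    obtain ⟨hv, hδz, hsz, hs0, hsM, _, _, hz⟩ := h i ai
    have hsub : v i - devUtil u δ i ai = s i ai := by linarith
    constructor
    · rw [hsub]; exact hs0
    · rcases hz with hz0 | hz1
      · have : δ i ai = 0 := le_antisymm (hz0 ▸ hδz) (hmix.1 i ai)
        rw [this, zero_mul]
      · have : s i ai = 0 := by
          have := hsz
          rw [hz1] at this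
          linarith
        rw [hsub, this, mul_zero]
  refine ⟨⟨hmix, fun i ai => ?_⟩, key⟩
  obtain ⟨k1, k2⟩ := key i ai
  obtain ⟨_, _, _, _, _, hmin, hmax, _⟩ := h i ai
  exact ⟨k1, k2, hmin, hmax⟩
end

section
/- Let (δ, v) be feasible for the continuous formulation (Q). Then there exist z and s such that (δ, v, z, s) is feasible for the mixed-integer formulation (P); in fact one may take s_i(a_i) := v_i − u_i(a_i, δ_{-i}) and z_i(a_i) := 1 if δ_i(a_i) > 0 and z_i(a_i) := 0 otherwise. -/
open Finset

variable {N : Type*} [Fintype N] [DecidableEq N] [Nonempty N]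
variable {A : N → Type*} [∀ i, Fintype (A i)] [∀ i, DecidableEq (A i)]
variable [∀ i, Nonempty (A i)]

lemma expUtil_bounds_aux (u : N → (∀ j, A j) → ℝ) (δ : ∀ i, A i → ℝ)
    (h : IsMixedProfile δ) (i : N) :
    minU u i ≤ expUtil u δ i ∧ expUtil u δ i ≤ maxU u i := by
  have hw : ∀ a : ∀ j, A j, 0 ≤ ∏ j, δ j (a j) :=
    fun a => Finset.prod_nonneg fun j _ => h.1 j (a j)
  have hsum : ∑ a : ∀ j, A j, ∏ j, δ j (a j) = 1 := by
    rw [← Fintype.prod_sum]; simp [h.2]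
  have e1 : ∑ a : ∀ j, A j, (∏ j, δ j (a j)) * minU u i = minU u i := by
    rw [← Finset.sum_mul, hsum, one_mul]
  have e2 : ∑ a : ∀ j, A j, (∏ j, δ j (a j)) * maxU u i = maxU u i := by
    rw [← Finset.sum_mul, hsum, one_mul]
  constructor
  · rw [← e1]
    exact Finset.sum_le_sum fun a _ =>
      mul_le_mul_of_nonneg_left (Finset.inf'_le _ (Finset.mem_univ a)) (hw a)
  · rw [show maxU u i = _ from e2.symm]
    exact Finset.sum_le_sum fun a _ =>
      mul_le_mul_of_nonneg_left (Finset.le_sup' _ (Finset.mem_univ a)) (hw a)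

lemma devUtil_bounds_aux (u : N → (∀ j, A j) → ℝ) (δ : ∀ i, A i → ℝ)
    (h : IsMixedProfile δ) (i : N) (ai : A i) :
    minU u i ≤ devUtil u δ i ai ∧ devUtil u δ i ai ≤ maxU u i := by
  apply expUtil_bounds_aux
  constructor
  · intro j a
    rcases eq_or_ne j i with rfl | hj
    · simp only [Function.update_self, pureStrat]
      split <;> norm_num
    · simp [Function.update_of_ne hj, h.1 j a]
  · intro j
    rcases eq_or_ne j i with rfl | hj
    · simp [pureStrat]
    · simp [Function.update_of_ne hj, h.2 j]

/-- Any feasible point of (Q) extends to a feasible point of (P), using the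
explicit witnesses `s i ai := v i - u_i(a_i, δ_{-i})` and
`z i ai := 1` if `δ i ai > 0`, else `0`. -/
theorem feasQ_to_feasP (u : N → (∀ j, A j) → ℝ) (δ : ∀ i, A i → ℝ) (v : N → ℝ)
    (hQ : FeasQ u δ v) :
    (∃ z s : ∀ i, A i → ℝ, FeasP u δ v z s) ∧
    FeasP u δ v (fun i ai => if 0 < δ i ai then 1 else 0)
      (fun i ai => v i - devUtil u δ i ai) := by
  obtain ⟨hmix, hQ2⟩ := hQ
  have key : FeasP u δ v (fun i ai => if 0 < δ i ai then 1 else 0)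
      (fun i ai => v i - devUtil u δ i ai) := by
    refine ⟨hmix, fun i ai => ?_⟩
    obtain ⟨h1, h2, h3, h4⟩ := hQ2 i ai
    obtain ⟨hd1, hd2⟩ := devUtil_bounds_aux u δ hmix i ai
    have hδ0 := hmix.1 i ai
    have hδ1 : δ i ai ≤ 1 := by
      have := Finset.single_le_sum (fun a _ => hmix.1 i a) (Finset.mem_univ ai)
      rw [hmix.2 i] at this; exact this
    dsimp only
    refine ⟨by ring, ?_, ?_, h1, by linarith, h3, h4, ?_⟩
    · split
      · exact hδ1
      · rename_i hne
        have : δ i ai = 0 := le_antisymm (not_lt.mp hne) hδ0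
        simp [this]
    · split
      · rename_i hpos
        have h0 : v i - devUtil u δ i ai = 0 := by
          rcases mul_eq_zero.mp h2 with h | h
          · exact absurd h (ne_of_gt hpos)
          · exact h
        rw [h0]; norm_num
      · rw [sub_zero, one_mul]; linarith
    · split
      · right; rfl
      · left; rfl
  exact ⟨⟨_, _, key⟩, key⟩
end

section
/- If (δ, v) is feasible for the continuous formulation (Q), then for every player i, v_i = u_i(δ); that is, the value variable of each player equals that player's expected utility under δ. -/
open Finset

variable {N : Type*} [Fintype N] [DecidableEq N] [Nonempty N]
variable {A : N → Type*} [∀ i, Fintype (A i)] [∀ i, DecidableEq (A i)]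
variable [∀ i, Nonempty (A i)]

/-- For any feasible point of (Q), each player's value variable equals their
expected utility. -/
theorem feasQ_value_eq_expUtil (u : N → (∀ j, A j) → ℝ) (δ : ∀ i, A i → ℝ)
    (v : N → ℝ) (hQ : FeasQ u δ v) :
    ∀ i : N, v i = expUtil u δ i := by
  obtain ⟨⟨hpos, hsum⟩, hc⟩ := hQ
  intro i
  have key : ∑ ai, δ i ai * devUtil u δ i ai = expUtil u δ i := by
    calc ∑ ai, δ i ai * devUtil u δ i ai
        = ∑ ai, ∑ a : ∀ j, A j,
            δ i ai * ((∏ j, Function.update δ i (pureStrat i ai) j (a j)) * u i a) := by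
          simp [devUtil, expUtil, Finset.mul_sum]
      _ = ∑ a : ∀ j, A j, ∑ ai,
            δ i ai * ((∏ j, Function.update δ i (pureStrat i ai) j (a j)) * u i a) :=
          Finset.sum_comm
      _ = expUtil u δ i := by
          unfold expUtil
          refine Finset.sum_congr rfl fun a _ => ?_
          have hprod : ∀ ai : A i, (∏ j, Function.update δ i (pureStrat i ai) j (a j))
              = pureStrat i ai (a i) * ∏ j ∈ Finset.univ.erase i, δ j (a j) := by
            intro ai
            rw [← Finset.mul_prod_erase _ _ (Finset.mem_univ i), Function.update_self]
            congr 1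
            exact Finset.prod_congr rfl fun j hj => by
              rw [Function.update_of_ne (Finset.ne_of_mem_erase hj)]
          have hprod2 : (∏ j, δ j (a j))
              = δ i (a i) * ∏ j ∈ Finset.univ.erase i, δ j (a j) :=
            (Finset.mul_prod_erase _ _ (Finset.mem_univ i)).symm
          simp only [hprod, hprod2, pureStrat]
          have hstep : ∀ ai : A i, δ i ai * (((if a i = ai then (1:ℝ) else 0) * ∏ j ∈ Finset.univ.erase i, δ j (a j)) * u i a)
              = (if a i = ai then δ i ai * ((∏ j ∈ Finset.univ.erase i, δ j (a j)) * u i a) else 0) := by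
            intro ai; split <;> ring
          rw [Finset.sum_congr rfl fun ai _ => hstep ai, Finset.sum_ite_eq]
          simp [mul_assoc]
  have hv : v i = ∑ ai, δ i ai * v i := by
    rw [← Finset.sum_mul, hsum i, one_mul]
  have h0 : ∑ ai, δ i ai * (v i - devUtil u δ i ai) = 0 :=
    Finset.sum_eq_zero fun ai _ => (hc i ai).2.1
  have := h0
  simp only [mul_sub, Finset.sum_sub_distrib] at this
  rw [key] at this
  linarith [hv, this]
end

section
/- If (δ, v) is feasible for the continuous formulation (Q), then δ is an exact Nash equilibrium of the game: for every player i and every mixed strategy δ'_i for player i, the expected utility of i under the profile obtained from δ by replacing δ_i with δ'_i is at most u_i(δ). -/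
open Finset

variable {N : Type*} [Fintype N] [DecidableEq N] [Nonempty N]
variable {A : N → Type*} [∀ i, Fintype (A i)] [∀ i, DecidableEq (A i)]
variable [∀ i, Nonempty (A i)]

lemma expUtil_update_eq (u : N → (∀ j, A j) → ℝ) (δ : ∀ i, A i → ℝ) (i : N)
    (δ' : A i → ℝ) :
    expUtil u (Function.update δ i δ') i =
      ∑ a : ∀ j, A j, δ' (a i) * ((∏ j ∈ univ.erase i, δ j (a j)) * u i a) := by
  unfold expUtil
  refine Finset.sum_congr rfl fun a _ => ?_
  rw [← Finset.mul_prod_erase univ _ (mem_univ i), Function.update_self, mul_assoc]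
  congr 2
  refine Finset.prod_congr rfl fun j hj => ?_
  rw [Function.update_of_ne (Finset.ne_of_mem_erase hj)]

lemma expUtil_update_eq_sum_devUtil (u : N → (∀ j, A j) → ℝ) (δ : ∀ i, A i → ℝ)
    (i : N) (δ' : A i → ℝ) :
    expUtil u (Function.update δ i δ') i = ∑ ai, δ' ai * devUtil u δ i ai := by
  have hdev : ∀ ai, devUtil u δ i ai =
      ∑ a : ∀ j, A j, (if a i = ai then (1:ℝ) else 0) *
        ((∏ j ∈ univ.erase i, δ j (a j)) * u i a) := by
    intro ai
    rw [devUtil, expUtil_update_eq]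
    rfl
  rw [expUtil_update_eq]
  simp only [hdev, Finset.mul_sum]
  rw [Finset.sum_comm]
  refine Finset.sum_congr rfl fun a _ => ?_
  simp [mul_ite, ite_mul, mul_assoc]

lemma expUtil_eq_sum_devUtil (u : N → (∀ j, A j) → ℝ) (δ : ∀ i, A i → ℝ) (i : N) :
    expUtil u δ i = ∑ ai, δ i ai * devUtil u δ i ai := by
  conv_lhs => rw [← Function.update_eq_self i δ]
  exact expUtil_update_eq_sum_devUtil u δ i (δ i)

/-- Any feasible point of (Q) yields an exact Nash equilibrium. -/
theorem feasQ_isNashEq (u : N → (∀ j, A j) → ℝ) (δ : ∀ i, A i → ℝ) (v : N → ℝ)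
    (hQ : FeasQ u δ v) : IsNashEq u δ := by
  obtain ⟨hmix, hfeas⟩ := hQ
  refine ⟨hmix, fun i δ' hpos hsum => ?_⟩
  have hδeq : expUtil u δ i = v i := by
    rw [expUtil_eq_sum_devUtil]
    have : ∀ ai, δ i ai * devUtil u δ i ai = δ i ai * v i := by
      intro ai
      have h := (hfeas i ai).2.1
      nlinarith [h]
    simp only [this, ← Finset.sum_mul, hmix.2 i, one_mul]
  rw [hδeq, expUtil_update_eq_sum_devUtil]
  calc ∑ ai, δ' ai * devUtil u δ i ai ≤ ∑ ai, δ' ai * v i := by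
        refine Finset.sum_le_sum fun ai _ => mul_le_mul_of_nonneg_left ?_ (hpos ai)
        linarith [(hfeas i ai).1]
    _ = v i := by rw [← Finset.sum_mul, hsum, one_mul]
end

section
/- Let (δ, v, ϖ) be feasible for the penalized formulation (R). Then δ is an ε-Nash equilibrium with ε = ϖ · max_{i ∈ N} |A_i|: for every player i and every mixed strategy δ'_i for i, the expected utility of i under the profile obtained from δ by replacing δ_i with δ'_i is at most u_i(δ) + ϖ · max_{j ∈ N} |A_j|. -/
open Finset

variable {N : Type*} [Fintype N] [DecidableEq N] [Nonempty N]
variable {A : N → Type*} [∀ i, Fintype (A i)] [∀ i, DecidableEq (A i)]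
variable [∀ i, Nonempty (A i)]

lemma prod_update_eq {N : Type*} [Fintype N] [DecidableEq N] {A : N → Type*}
    [∀ i, Fintype (A i)] (δ : ∀ i, A i → ℝ) (i : N) (σ : A i → ℝ) (a : ∀ j, A j) :
    ∏ j, Function.update δ i σ j (a j) =
      σ (a i) * ∏ j ∈ Finset.univ.erase i, δ j (a j) := by
  rw [← Finset.mul_prod_erase Finset.univ _ (Finset.mem_univ i)]
  simp only [Function.update_self]
  congr 1
  refine Finset.prod_congr rfl fun j hj => ?_
  rw [Function.update_of_ne (Finset.ne_of_mem_erase hj)]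

lemma expUtil_update_eq_s9 {N : Type*} [Fintype N] [DecidableEq N] {A : N → Type*}
    [∀ i, Fintype (A i)] [∀ i, DecidableEq (A i)]
    (u : N → (∀ j, A j) → ℝ) (δ : ∀ i, A i → ℝ) (i : N) (σ : A i → ℝ) :
    expUtil u (Function.update δ i σ) i = ∑ ai, σ ai * devUtil u δ i ai := by
  have key : ∀ ai : A i, devUtil u δ i ai =
      ∑ a : ∀ j, A j, (if a i = ai then 1 else 0) *
        ((∏ j ∈ Finset.univ.erase i, δ j (a j)) * u i a) := by
    intro ai
    unfold devUtil expUtil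
    refine Finset.sum_congr rfl fun a _ => ?_
    rw [prod_update_eq]
    simp [pureStrat, mul_assoc]
  simp only [key, Finset.mul_sum]
  rw [Finset.sum_comm]
  unfold expUtil
  refine Finset.sum_congr rfl fun a _ => ?_
  rw [prod_update_eq]
  have : ∀ ai : A i, σ ai * ((if a i = ai then 1 else 0) *
      ((∏ j ∈ Finset.univ.erase i, δ j (a j)) * u i a)) =
      (if ai = a i then σ ai * ((∏ j ∈ Finset.univ.erase i, δ j (a j)) * u i a) else 0) := by
    intro ai
    by_cases h : ai = a i <;> simp [h, eq_comm]
  simp only [this, Finset.sum_ite_eq', Finset.mem_univ, if_true, mul_assoc]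

lemma expUtil_eq_sum_dev {N : Type*} [Fintype N] [DecidableEq N] {A : N → Type*}
    [∀ i, Fintype (A i)] [∀ i, DecidableEq (A i)]
    (u : N → (∀ j, A j) → ℝ) (δ : ∀ i, A i → ℝ) (i : N) :
    expUtil u δ i = ∑ ai, δ i ai * devUtil u δ i ai := by
  rw [← expUtil_update_eq_s9 u δ i (δ i), Function.update_eq_self]

/-- Any feasible point of (R) with objective value `ϖ` is an `ε`-Nash
equilibrium with `ε = ϖ · max_{i ∈ N} |A_i|`. -/
theorem feasR_epsNash (u : N → (∀ j, A j) → ℝ) (δ : ∀ i, A i → ℝ) (v : N → ℝ)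
    (ϖ : ℝ) (hR : FeasR u δ v ϖ) :
    ∀ (i : N) (δ' : A i → ℝ), (∀ a, 0 ≤ δ' a) → (∑ a, δ' a = 1) →
      expUtil u (Function.update δ i δ') i ≤
        expUtil u δ i +
          ϖ * Finset.univ.sup' Finset.univ_nonempty
            (fun j : N => (Fintype.card (A j) : ℝ)) := by
  obtain ⟨⟨hpos, hsum⟩, hF⟩ := hR
  intro i δ' hδ'pos hδ'sum
  set M : ℝ := Finset.univ.sup' Finset.univ_nonempty
    (fun j : N => (Fintype.card (A j) : ℝ)) with hM
  have hϖ0 : 0 ≤ ϖ := by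
    obtain ⟨ai⟩ := ‹∀ i, Nonempty (A i)› i
    have h := hF i ai
    exact le_trans (mul_nonneg (hpos i ai) h.2.2.1) h.1
  have hcardM : (Fintype.card (A i) : ℝ) ≤ M := by
    rw [hM]
    exact Finset.le_sup' (fun j : N => (Fintype.card (A j) : ℝ)) (Finset.mem_univ i)
  -- upper bound on deviation payoff
  have h1 : expUtil u (Function.update δ i δ') i ≤ v i := by
    rw [expUtil_update_eq_s9]
    calc ∑ ai, δ' ai * devUtil u δ i ai ≤ ∑ ai, δ' ai * v i := by
          refine Finset.sum_le_sum fun ai _ => ?_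
          have := (hF i ai).2.2.1
          exact mul_le_mul_of_nonneg_left (by linarith) (hδ'pos ai)
      _ = v i := by rw [← Finset.sum_mul, hδ'sum, one_mul]
  -- lower bound on current payoff
  have h2 : v i - (Fintype.card (A i) : ℝ) * ϖ ≤ expUtil u δ i := by
    rw [expUtil_eq_sum_dev]
    have : ∑ ai, δ i ai * devUtil u δ i ai =
        v i - ∑ ai : A i, δ i ai * (v i - devUtil u δ i ai) := by
      have : ∑ ai : A i, δ i ai * (v i - devUtil u δ i ai) =
          (∑ ai : A i, δ i ai) * v i - ∑ ai, δ i ai * devUtil u δ i ai := by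
        rw [Finset.sum_mul, ← Finset.sum_sub_distrib]
        exact Finset.sum_congr rfl fun ai _ => by ring
      rw [this, hsum i]; ring
    rw [this]
    have hb : ∑ ai : A i, δ i ai * (v i - devUtil u δ i ai) ≤
        (Fintype.card (A i) : ℝ) * ϖ := by
      calc ∑ ai : A i, δ i ai * (v i - devUtil u δ i ai) ≤ ∑ _ai : A i, ϖ :=
            Finset.sum_le_sum fun ai _ => (hF i ai).1
        _ = (Fintype.card (A i) : ℝ) * ϖ := by
            simp [Finset.card_univ, mul_comm]
      ;
    linarith
  have : (Fintype.card (A i) : ℝ) * ϖ ≤ M * ϖ :=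
    mul_le_mul_of_nonneg_right hcardM hϖ0
  linarith [h1, h2, this]
end

section
/- Let (δ, v, ϖ) be feasible for the penalized formulation (R). Then for every player i, the per-player deviation improvement is bounded by ϖ·|A_i|: max_{a_i ∈ A_i} u_i(a_i, δ_{-i}) − u_i(δ) ≤ ϖ · |A_i|. -/
open Finset

variable {N : Type*} [Fintype N] [DecidableEq N] [Nonempty N]
variable {A : N → Type*} [∀ i, Fintype (A i)] [∀ i, DecidableEq (A i)]
variable [∀ i, Nonempty (A i)]

lemma prod_update_eval {N : Type*} [Fintype N] [DecidableEq N] {A : N → Type*}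
    [∀ i, Fintype (A i)]
    (δ : ∀ i, A i → ℝ) (i : N) (s' : A i → ℝ) (a : ∀ j, A j) :
    ∏ j, (Function.update δ i s') j (a j)
      = s' (a i) * ∏ j ∈ Finset.univ.erase i, δ j (a j) := by
  rw [← Finset.mul_prod_erase Finset.univ (fun j => (Function.update δ i s') j (a j))
        (Finset.mem_univ i)]
  congr 1
  · simp
  · exact Finset.prod_congr rfl fun j hj => by
      rw [Function.update_of_ne (Finset.ne_of_mem_erase hj)]

lemma expUtil_decomp {N : Type*} [Fintype N] [DecidableEq N] {A : N → Type*}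
    [∀ i, Fintype (A i)] [∀ i, DecidableEq (A i)]
    (u : N → (∀ j, A j) → ℝ) (δ : ∀ i, A i → ℝ) (i : N) :
    ∑ ai, δ i ai * devUtil u δ i ai = expUtil u δ i := by
  unfold devUtil expUtil
  simp_rw [Finset.mul_sum]
  rw [Finset.sum_comm]
  · apply Finset.sum_congr rfl
    intro a _
    rw [← Finset.mul_prod_erase Finset.univ (fun j => δ j (a j)) (Finset.mem_univ i)]
    have : ∀ ai : A i, δ i ai * ((∏ j, (Function.update δ i (pureStrat i ai)) j (a j)) * u i a)
        = if a i = ai then δ i ai * ((∏ j ∈ Finset.univ.erase i, δ j (a j)) * u i a) else 0 := by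
      intro ai
      rw [prod_update_eval]
      unfold pureStrat
      by_cases h : a i = ai <;> simp [h] <;> ring
    rw [Finset.sum_congr rfl fun ai _ => this ai, Finset.sum_ite_eq]
    simp [mul_assoc]

/-- For any feasible point of (R), each player's deviation improvement is
bounded by `ϖ · |A_i|`. -/
theorem feasR_player_deviation_bound (u : N → (∀ j, A j) → ℝ)
    (δ : ∀ i, A i → ℝ) (v : N → ℝ) (ϖ : ℝ) (hR : FeasR u δ v ϖ) :
    ∀ i : N,
      Finset.univ.sup' Finset.univ_nonempty (fun ai : A i => devUtil u δ i ai)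
        - expUtil u δ i ≤ ϖ * (Fintype.card (A i) : ℝ) := by
  obtain ⟨⟨hpos, hsum⟩, hcons⟩ := hR
  intro i
  have hsup : Finset.univ.sup' Finset.univ_nonempty (fun ai : A i => devUtil u δ i ai) ≤ v i :=
    Finset.sup'_le _ _ fun ai _ => by linarith [(hcons i ai).2.2.1]
  have hdec := expUtil_decomp u δ i
  have hvi : ∑ ai : A i, δ i ai * v i = v i := by
    rw [← Finset.sum_mul, hsum i, one_mul]
  have hbound : v i - expUtil u δ i ≤ ϖ * (Fintype.card (A i) : ℝ) := by
    have : ∑ ai : A i, δ i ai * (v i - devUtil u δ i ai) = v i - expUtil u δ i := by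
      simp_rw [mul_sub]
      rw [Finset.sum_sub_distrib, hvi, hdec]
    rw [← this]
    calc ∑ ai : A i, δ i ai * (v i - devUtil u δ i ai) ≤ ∑ _ai : A i, ϖ :=
          Finset.sum_le_sum fun ai _ => (hcons i ai).1
      _ = ϖ * (Fintype.card (A i) : ℝ) := by
          rw [Finset.sum_const, Finset.card_univ, nsmul_eq_mul, mul_comm]
  linarith
end
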